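/- Let n ≥ 1. For every x, y ∈ Z/nZ there exists a unique quandle endomorphism f of the dihedral quandle Z_n^dih with f(0) = x and f(1) = y, namely the affine map a ↦ (y − x)·a + x; consequently the map f ↦ (f(0), f(1)) is a bijection from the set of quandle endomorphisms of Z_n^dih onto (Z/nZ) × (Z/nZ). -/
import Mathlib


/-- A quandle endomorphism of the dihedral quandle `Z_n^dih`. -/
def IsDihedralEnd (n : ℕ) (f : ZMod n → ZMod n) : Prop :=
  ∀ x y : ZMod n, f (2 * y - x) = 2 * f y - f x

lemma dihedral_end_nat (n : ℕ) (f : ZMod n → ZMod n) (hf : IsDihedralEnd n f) :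
    ∀ k : ℕ, f (k : ZMod n) = (f 1 - f 0) * k + f 0 := by
  have key : ∀ k : ℕ, f (k : ZMod n) = (f 1 - f 0) * k + f 0 ∧
      f ((k + 1 : ℕ) : ZMod n) = (f 1 - f 0) * (k + 1 : ℕ) + f 0 := by
    intro k
    induction k with
    | zero => constructor <;> push_cast <;> ring_nf <;> simp
    | succ m ih =>
      refine ⟨ih.2, ?_⟩
      have h : ((m + 1 + 1 : ℕ) : ZMod n) = 2 * ((m + 1 : ℕ) : ZMod n) - (m : ℕ) := by
        push_cast; ring
      rw [h, hf, ih.1, ih.2]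
      push_cast; ring
  exact fun k => (key k).1

lemma dihedral_end_affine (n : ℕ) (hn : 1 ≤ n) (f : ZMod n → ZMod n)
    (hf : IsDihedralEnd n f) : ∀ a : ZMod n, f a = (f 1 - f 0) * a + f 0 := by
  haveI : NeZero n := ⟨by omega⟩
  intro a
  have := dihedral_end_nat n f hf a.val
  rwa [ZMod.natCast_val, ZMod.cast_id] at this

lemma affine_is_end (n : ℕ) (c d : ZMod n) : IsDihedralEnd n (fun a => c * a + d) := by
  intro x y; simp only; ring

theorem dihedral_end_unique_affine (n : ℕ) (hn : 1 ≤ n) :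
    (∀ x y : ZMod n, ∀ f : ZMod n → ZMod n,
        (IsDihedralEnd n f ∧ f 0 = x ∧ f 1 = y) ↔ f = fun a => (y - x) * a + x) ∧
    Function.Bijective
      (fun f : {f : ZMod n → ZMod n // IsDihedralEnd n f} => (f.1 0, f.1 1)) := by
  have main : ∀ x y : ZMod n, ∀ f : ZMod n → ZMod n,
      (IsDihedralEnd n f ∧ f 0 = x ∧ f 1 = y) ↔ f = fun a => (y - x) * a + x := by
    intro x y f
    constructor
    · rintro ⟨hf, h0, h1⟩
      funext a
      rw [dihedral_end_affine n hn f hf a, h0, h1]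
    · rintro rfl
      refine ⟨affine_is_end n _ _, by simp, by ring⟩
  refine ⟨main, ?_, ?_⟩
  · rintro ⟨f, hf⟩ ⟨g, hg⟩ h
    simp only [Prod.mk.injEq] at h
    have hf' := (main (f 0) (f 1) f).mp ⟨hf, rfl, rfl⟩
    have hg' := (main (f 0) (f 1) g).mp ⟨hg, h.1.symm, h.2.symm⟩
    exact Subtype.ext (hf'.trans hg'.symm)
  · rintro ⟨x, y⟩
    refine ⟨⟨fun a => (y - x) * a + x, affine_is_end n _ _⟩, ?_⟩
    simp only [Prod.mk.injEq]
    constructor <;> ring_nf <;> simp
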